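/- Let R be a commutative ring, M an R-module, and x ∈ R. Consider the inverse system {M, x} indexed by ℕ where each module is M and each transition map is multiplication by x. Then lim^i {M, x} ≅ Ext^i_R(R_x, M) for i = 0, 1, and Ext^i_R(R_x, M) = 0 for all i ≥ 2, where R_x is the localization of R at the powers of x. -/

import Mathlib

open CategoryTheory

universe u

/-- The `i`-th Ext module `Ext^i_R(X, Y)` of two `R`-modules. -/
noncomputable def extMod (R : Type u) [CommRing R] (i : ℕ)
    (X Y : Type u) [AddCommGroup X] [Module R X] [AddCommGroup Y] [Module R Y] :
    ModuleCat.{u} R :=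
  ((Ext R (ModuleCat.{u} R) i).obj (Opposite.op (ModuleCat.of R X))).obj (ModuleCat.of R Y)

/-- For an inverse system `{N_α}` indexed by `ℕ` with transition maps `g α : N (α+1) → N α`,
the map `∏ N_α → ∏ N_α`, `s ↦ (s α - g α (s (α+1)))_α`, whose kernel is `lim N_α` and whose
cokernel is `lim¹ N_α`. -/
noncomputable def invTrans {R : Type u} [CommRing R] (N : ℕ → Type u)
    [∀ n, AddCommGroup (N n)] [∀ n, Module R (N n)]
    (g : ∀ n : ℕ, N (n + 1) →ₗ[R] N n) : (∀ n, N n) →ₗ[R] (∀ n, N n) :=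
  LinearMap.pi fun n => LinearMap.proj n - (g n).comp (LinearMap.proj (n + 1))

/-- The inverse system `{M, x}`: every module is `M` and every transition map is
multiplication by `x`. -/
noncomputable def mulxTrans {R : Type u} [CommRing R] (M : Type u) [AddCommGroup M] [Module R M]
    (x : R) : (∀ _ : ℕ, M) →ₗ[R] (∀ _ : ℕ, M) :=
  invTrans (fun _ => M) (fun _ => x • LinearMap.id)

namespace Stmt6Aux
open Limits

variable {R : Type u} [CommRing R]

/-- e_n ↦ e_n - x • e_{n+1} on ℕ →₀ R. -/
noncomputable def dF (R : Type u) [CommRing R] (x : R) : (ℕ →₀ R) →ₗ[R] (ℕ →₀ R) :=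
  LinearMap.id - x • Finsupp.lmapDomain R R (· + 1)

lemma dF_apply_zero (x : R) (f : ℕ →₀ R) : dF R x f 0 = f 0 := by
  simp [dF, Finsupp.mapDomain_notin_range, show (0:ℕ) ∉ Set.range (· + 1) by simp]

lemma dF_apply_succ (x : R) (f : ℕ →₀ R) (n : ℕ) :
    dF R x f (n + 1) = f (n + 1) - x * f n := by
  simp [dF, Finsupp.mapDomain_apply (add_left_injective 1) f n]

lemma dF_single (x : R) (n : ℕ) (r : R) :
    dF R x (Finsupp.single n r) =
      Finsupp.single n r - x • Finsupp.single (n + 1) r := by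
  simp [dF, Finsupp.mapDomain_single]

lemma dF_injective (x : R) : Function.Injective (dF R x) := by
  rw [← LinearMap.ker_eq_bot, LinearMap.ker_eq_bot']
  intro f hf
  have h0 : f 0 = 0 := by
    have := congrArg (fun g => g 0) hf; simpa [dF_apply_zero] using this
  have hs : ∀ n, f n = 0 := by
    intro n
    induction n with
    | zero => exact h0
    | succ n ih =>
      have := congrArg (fun g => g (n + 1)) hf
      simp only [dF_apply_succ, Finsupp.coe_zero, Pi.zero_apply] at this
      rw [ih, mul_zero, sub_zero] at this
      exact this
  ext n; simp [hs]

variable (x : R)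

local notation "T" => Localization.Away x

noncomputable def ivx : T := IsLocalization.Away.invSelf x

lemma ivx_mul : algebraMap R T x * ivx x = 1 := IsLocalization.Away.mul_invSelf x

lemma pow_mul_ivx_pow (n : ℕ) :
    algebraMap R T (x ^ n) * (ivx x) ^ n = 1 := by
  rw [map_pow, ← mul_pow, ivx_mul, one_pow]

/-- augmentation `e_n ↦ x^{-n}` -/
noncomputable def pz : (ℕ →₀ R) →ₗ[R] T :=
  Finsupp.linearCombination R (fun n => (ivx x) ^ n)

lemma pz_single (n : ℕ) (r : R) : pz x (Finsupp.single n r) = r • (ivx x) ^ n := by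
  simp [pz]

lemma pz_comp_dF : (pz x).comp (dF R x) = 0 := by
  apply Finsupp.lhom_ext
  intro n r
  rw [LinearMap.comp_apply, LinearMap.zero_apply, dF_single, map_sub, LinearMap.map_smul,
    pz_single, pz_single, pow_succ', smul_comm x r]
  rw [Algebra.smul_def x, ← mul_assoc, ivx_mul, one_mul, sub_self]

lemma pz_surjective : Function.Surjective (pz x) := by
  intro z
  obtain ⟨⟨r, s⟩, h⟩ := IsLocalization.surj (Submonoid.powers x) z
  obtain ⟨n, hn⟩ := s.2
  have hn' : x ^ n = (s : R) := hn
  refine ⟨Finsupp.single n r, ?_⟩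
  rw [pz_single, Algebra.smul_def]
  have h2 : z * algebraMap R T (x ^ n) = algebraMap R T r := by rw [hn']; exact h
  calc algebraMap R T r * (ivx x) ^ n = z * (algebraMap R T (x ^ n) * (ivx x) ^ n) := by
        rw [← h2, mul_assoc]
    _ = z := by rw [pow_mul_ivx_pow, mul_one]

/-- partial sums -/
def psum (f : ℕ →₀ R) (m : ℕ) : R := ∑ j ∈ Finset.range (m + 1), f j * x ^ (m - j)

lemma psum_zero (f : ℕ →₀ R) : psum x f 0 = f 0 := by simp [psum]

lemma psum_succ (f : ℕ →₀ R) (m : ℕ) :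
    psum x f (m + 1) = x * psum x f m + f (m + 1) := by
  rw [psum, psum, Finset.sum_range_succ]
  simp only [Nat.sub_self, pow_zero, mul_one]
  congr 1
  rw [Finset.mul_sum]
  apply Finset.sum_congr rfl
  intro j hj
  rw [Finset.mem_range] at hj
  rw [show m + 1 - j = (m - j) + 1 by omega, pow_succ]
  ring

lemma smul_ivx_aux (j N : ℕ) (hj : j ≤ N) (r : R) :
    algebraMap R T (x ^ N) * (r • (ivx x) ^ j) = algebraMap R T (r * x ^ (N - j)) := by
  rw [Algebra.smul_def]
  conv_rhs => rw [map_mul]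
  have hxN : algebraMap R T (x ^ N)
      = algebraMap R T (x ^ (N - j)) * algebraMap R T (x ^ j) := by
    rw [← map_mul, ← pow_add, Nat.sub_add_cancel hj]
  rw [hxN]
  calc algebraMap R T (x ^ (N - j)) * algebraMap R T (x ^ j) *
        (algebraMap R T r * (ivx x) ^ j)
      = algebraMap R T r * algebraMap R T (x ^ (N - j)) *
        (algebraMap R T (x ^ j) * (ivx x) ^ j) := by ring
    _ = algebraMap R T r * algebraMap R T (x ^ (N - j)) := by
        rw [pow_mul_ivx_pow, mul_one]

lemma ker_pz_le_range_dF : LinearMap.ker (pz x) ≤ LinearMap.range (dF R x) := by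
  intro f hf
  rw [LinearMap.mem_ker] at hf
  set N := f.support.sup id with hN
  have hsupp : f.support ⊆ Finset.range (N + 1) := by
    intro a ha
    simp only [Finset.mem_range, Nat.lt_succ_iff]
    exact Finset.le_sup (f := id) ha
  have hfvanish : ∀ m, N < m → f m = 0 := by
    intro m hm
    by_contra h
    exact absurd (Finset.mem_range.1 (hsupp (Finsupp.mem_support_iff.2 h))) (by omega)
  have hmapped : algebraMap R T (psum x f N) = 0 := by
    have hsum : pz x f = ∑ j ∈ Finset.range (N + 1), f j • (ivx x) ^ j := by
      rw [pz, Finsupp.linearCombination_apply]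
      exact Finsupp.sum_of_support_subset f hsupp _ (by intro i _; simp)
    have hmul := congrArg (fun t => algebraMap R T (x ^ N) * t) hf
    simp only [mul_zero] at hmul
    rw [hsum, Finset.mul_sum] at hmul
    rw [Finset.sum_congr rfl (fun j hj => smul_ivx_aux x j N
      (Nat.lt_succ_iff.1 (Finset.mem_range.1 hj)) (f j)), ← map_sum] at hmul
    exact hmul
  obtain ⟨⟨m, k, hk⟩, hm⟩ :=
    (IsLocalization.map_eq_zero_iff (Submonoid.powers x) T (psum x f N)).1 hmapped
  have hm2 : x ^ k * psum x f N = 0 := by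
    have : (⟨m, k, hk⟩ : Submonoid.powers x) = ⟨x ^ k, k, rfl⟩ := by
      ext; exact hk.symm
    rw [this] at hm
    exact hm
  have htail : ∀ j, psum x f (N + j) = x ^ j * psum x f N := by
    intro j
    induction j with
    | zero => simp
    | succ j ih =>
      rw [show N + (j + 1) = (N + j) + 1 by omega, psum_succ, ih,
        hfvanish _ (by omega), add_zero, pow_succ]
      ring
  have hzero : ∀ m', N + k ≤ m' → psum x f m' = 0 := by
    intro m' hm'
    obtain ⟨j, rfl⟩ := Nat.exists_eq_add_of_le hm'
    rw [show N + k + j = N + (k + j) by omega, htail, pow_add,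
      mul_comm (x ^ k) (x ^ j), mul_assoc, hm2, mul_zero]
  refine ⟨Finsupp.onFinset (Finset.range (N + k + 1)) (psum x f) (by
    intro a ha
    rw [Finset.mem_range]
    by_contra hc
    exact ha (hzero a (by omega))), ?_⟩
  ext n
  cases n with
  | zero =>
    rw [dF_apply_zero]
    show psum x f 0 = f 0
    exact psum_zero x f
  | succ n =>
    rw [dF_apply_succ]
    show psum x f (n + 1) - x * psum x f n = f (n + 1)
    rw [psum_succ]; ring

variable (R)
noncomputable abbrev Fmod : ModuleCat.{u} R := ModuleCat.of R (ℕ →₀ R)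
noncomputable abbrev Zmod : ModuleCat.{u} R := ModuleCat.of R PUnit
variable {R}

noncomputable def Tmod : ModuleCat.{u} R := ModuleCat.of R T

noncomputable def cx : ChainComplex (ModuleCat.{u} R) ℕ :=
  ChainComplex.of
    (fun n => match n with
      | 0 => Fmod R
      | 1 => Fmod R
      | _ + 2 => Zmod R)
    (fun n => match n with
      | 0 => ModuleCat.ofHom (dF R x)
      | _ + 1 => 0)
    (fun _ => zero_comp)

lemma cx_d_1_0 : (cx x).d 1 0 = ModuleCat.ofHom (dF R x) := by unfold cx; simp only [ChainComplex.of]; exact ChainComplex.of_d _ _ 0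

lemma cx_d_succ (n : ℕ) : (cx x).d (n + 2) (n + 1) = 0 := by unfold cx; simp only [ChainComplex.of]; exact ChainComplex.of_d _ _ (n + 1)

noncomputable def cxπ : cx x ⟶ (ChainComplex.single₀ (ModuleCat.{u} R)).obj (Tmod x) :=
  ((cx x).toSingle₀Equiv (Tmod x)).symm ⟨ModuleCat.ofHom (pz x), by
    rw [cx_d_1_0]
    ext a
    exact DFunLike.congr_fun (pz_comp_dF x) a⟩

lemma cxπ_f_zero : (cxπ x).f 0 = ModuleCat.ofHom (pz x) :=
  ChainComplex.toSingle₀Equiv_symm_apply_f_zero _ _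

instance cx_projective (n : ℕ) : Projective ((cx x).X n) := by
  match n with
  | 0 => exact ModuleCat.projective_of_free (M := Fmod R) Finsupp.basisSingleOne
  | 1 => exact ModuleCat.projective_of_free (M := Fmod R) Finsupp.basisSingleOne
  | n + 2 => exact ModuleCat.projective_of_free (M := Zmod R) (Module.Basis.empty PUnit.{u+1} : Module.Basis PEmpty.{u+1} R PUnit.{u+1})

lemma cx_exactAt_succ (n : ℕ) : (cx x).ExactAt (n + 1) := by
  rw [HomologicalComplex.exactAt_iff' _ (n + 2) (n + 1) n (by simp) (by simp)]
  cases n with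
  | zero =>
    rw [ShortComplex.moduleCat_exact_iff]
    intro a ha
    have ha' : dF R x a = 0 := by
      have h2 : ((cx x).d 1 0) a = 0 := ha
      rw [cx_d_1_0] at h2
      exact h2
    have hz : a = 0 := by
      apply dF_injective x
      rw [ha']
      exact (map_zero (dF R x)).symm
    exact ⟨0, by rw [map_zero, hz]⟩
  | succ n =>
    exact ShortComplex.exact_of_isZero_X₂ _
      (@ModuleCat.isZero_of_subsingleton R _ _ (inferInstanceAs (Subsingleton PUnit)))

noncomputable abbrev S1 : ShortComplex (ModuleCat.{u} R) := (cx x).sc' 1 0 0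
noncomputable abbrev S2 : ShortComplex (ModuleCat.{u} R) :=
  ((ChainComplex.single₀ (ModuleCat.{u} R)).obj (Tmod x)).sc' 1 0 0

lemma S1_g_eq : (S1 x).g = 0 := (cx x).shape 0 0 (fun h => Nat.succ_ne_zero 0 h)

noncomputable abbrev sφ : S1 x ⟶ S2 x :=
  (HomologicalComplex.shortComplexFunctor' (ModuleCat.{u} R) _ 1 0 0).map (cxπ x)

lemma sφ_τ₂ : (sφ x).τ₂ = (cxπ x).f 0 := rfl

lemma hcond : LinearMap.range (S1 x).moduleCatToCycles ≤
    LinearMap.ker ((sφ x).τ₂.hom.comp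
      (LinearMap.ker (S1 x).g.hom).subtype) := by
  rintro y ⟨b, hb⟩
  rw [LinearMap.mem_ker, ← hb]
  show (sφ x).τ₂ ((S1 x).f b) = 0
  have h1 := LinearMap.congr_fun (congrArg ModuleCat.Hom.hom (sφ x).comm₁₂) b
  have h2 : (sφ x).τ₂ ((S1 x).f b) = ((S2 x).f) ((sφ x).τ₁ b) := h1.symm
  rw [h2, show (S2 x).f = 0 from rfl]
  rfl

noncomputable def phiH : (LinearMap.ker (S1 x).g.hom ⧸ LinearMap.range (S1 x).moduleCatToCycles) →ₗ[R] ((S2 x).X₂ : Type u) :=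
  Submodule.liftQ _ ((sφ x).τ₂.hom.comp
    (LinearMap.ker (S1 x).g.hom).subtype) (hcond x)

noncomputable def γdata : ShortComplex.LeftHomologyMapData (sφ x)
    ((S1 x).moduleCatLeftHomologyData) (ShortComplex.LeftHomologyData.ofZeros (S2 x) rfl rfl) where
  φK := (S1 x).moduleCatLeftHomologyData.i ≫ (sφ x).τ₂
  φH := ModuleCat.ofHom (phiH x)
  commi := by
    ext a
    rfl
  commf' := by
    ext a
    exact (LinearMap.congr_fun (congrArg ModuleCat.Hom.hom (sφ x).comm₁₂) a).symm
  commπ := by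
    ext a
    rfl

lemma phiH_bijective : Function.Bijective (phiH x) := by
  constructor
  · rw [injective_iff_map_eq_zero]
    intro c hc
    obtain ⟨⟨a, ha⟩, rfl⟩ := Submodule.Quotient.mk_surjective _ c
    have h3 : (cxπ x).f 0 a = 0 := hc
    rw [cxπ_f_zero] at h3
    have hpz : a ∈ LinearMap.ker (pz x) := h3
    obtain ⟨b, hb⟩ := ker_pz_le_range_dF x hpz
    rw [Submodule.Quotient.mk_eq_zero]
    refine ⟨b, Subtype.ext ?_⟩
    show (S1 x).f b = a
    rw [show (S1 x).f = (cx x).d 1 0 from rfl, cx_d_1_0]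
    exact hb
  · intro z
    obtain ⟨a, ha⟩ := pz_surjective x z
    refine ⟨Submodule.Quotient.mk ⟨a, ?_⟩, ?_⟩
    · show (S1 x).g.hom a = 0
      exact (LinearMap.congr_fun (congrArg ModuleCat.Hom.hom (S1_g_eq x)) a).trans rfl
    · show (cxπ x).f 0 a = z
      rw [cxπ_f_zero]
      exact ha

lemma quasiIsoAt_cxπ_zero : QuasiIsoAt (cxπ x) 0 := by
  rw [quasiIsoAt_iff' _ 1 0 0 (by simp) (by simp)]
  rw [(γdata x).quasiIso_iff]
  rw [ConcreteCategory.isIso_iff_bijective]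
  exact phiH_bijective x

instance quasiIso_cxπ : QuasiIso (cxπ x) where
  quasiIsoAt i := by
    cases i with
    | zero => exact quasiIsoAt_cxπ_zero x
    | succ n =>
      rw [quasiIsoAt_iff_exactAt' (cxπ x) (n + 1)
        (ChainComplex.exactAt_succ_single_obj _ _)]
      exact cx_exactAt_succ x n

noncomputable def cxRes : ProjectiveResolution (Tmod x) where
  complex := cx x
  π := cxπ x


lemma cxRes_complex : (cxRes x).complex = cx x := rfl

variable (M : Type u) [AddCommGroup M] [Module R M]

/-- Hom(F, M) ≃ ∏ M -/
noncomputable def eF : ((Fmod R : ModuleCat.{u} R) ⟶ ModuleCat.of R M) ≃ₗ[R] (ℕ → M) where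
  toFun φ n := φ (Finsupp.single n 1)
  map_add' φ ψ := rfl
  map_smul' r φ := rfl
  invFun s := ModuleCat.ofHom (Finsupp.linearCombination R s)
  left_inv φ := by
    apply ModuleCat.hom_ext
    apply Finsupp.lhom_ext
    intro n r
    simp only [ModuleCat.hom_ofHom, LinearMap.coe_comp, Function.comp_apply, Finsupp.lsingle_apply,
      Finsupp.linearCombination_single]
    rw [← map_smul, Finsupp.smul_single, smul_eq_mul, mul_one]
  right_inv s := by
    funext n
    show Finsupp.linearCombination R s (Finsupp.single n 1) = s n
    rw [Finsupp.linearCombination_single, one_smul]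

lemma eF_key (φ : (Fmod R : ModuleCat.{u} R) ⟶ ModuleCat.of R M) :
    eF M (ModuleCat.ofHom (dF R x) ≫ φ) = mulxTrans M x (eF M φ) := by
  funext n
  show (φ.hom : (ℕ →₀ R) →ₗ[R] M) (dF R x (Finsupp.single n 1)) = _
  rw [dF_single, map_sub, map_smul]
  rfl


noncomputable abbrev Kc : CochainComplex (ModuleCat.{u} R) ℕ :=
  (cx x).linearYonedaObj R (ModuleCat.of R M)

noncomputable def eF0 : (((Kc x M).X 0 : ModuleCat.{u} R) : Type u) ≃ₗ[R] (ℕ → M) := eF M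
noncomputable def eF1 : (((Kc x M).X 1 : ModuleCat.{u} R) : Type u) ≃ₗ[R] (ℕ → M) := eF M

lemma Kd01_apply (φ : (((Kc x M).X 0 : ModuleCat.{u} R) : Type u)) :
    (Kc x M).d 0 1 φ = ModuleCat.ofHom (dF R x) ≫ φ := by
  rw [ChainComplex.linearYonedaObj_d]
  show Linear.leftComp R _ ((cx x).d 1 0) φ = _
  rw [cx_d_1_0]
  rfl

lemma eF1_d (φ : (((Kc x M).X 0 : ModuleCat.{u} R) : Type u)) :
    eF1 x M ((Kc x M).d 0 1 φ) = mulxTrans M x (eF0 x M φ) := by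
  rw [Kd01_apply]
  exact eF_key x M φ

lemma hker0 :
    Submodule.map (eF0 x M).toLinearMap (LinearMap.ker (((Kc x M).sc' 0 0 1).g.hom))
      = LinearMap.ker (mulxTrans M x) := by
  ext b
  constructor
  · rintro ⟨φ, hφ, rfl⟩
    have h1 : (Kc x M).d 0 1 φ = 0 := hφ
    show mulxTrans M x (eF0 x M φ) = 0
    rw [← eF1_d, h1, map_zero]
  · intro hb
    have hb' : mulxTrans M x b = 0 := hb
    refine ⟨(eF0 x M).symm b, ?_, by simp⟩
    show (Kc x M).d 0 1 ((eF0 x M).symm b) = 0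
    apply (eF1 x M).injective
    rw [eF1_d, LinearEquiv.apply_symm_apply, map_zero]
    exact hb'

noncomputable def ker0Equiv :
    (LinearMap.ker (((Kc x M).sc' 0 0 1).g.hom) : Type u) ≃ₗ[R] LinearMap.ker (mulxTrans M x) :=
  ((eF0 x M).submoduleMap _).trans (LinearEquiv.ofEq _ _ (hker0 x M))

lemma toCycles0_eq_bot :
    LinearMap.range ((Kc x M).sc' 0 0 1).moduleCatToCycles = ⊥ := by
  rw [LinearMap.range_eq_bot]
  apply LinearMap.ext
  intro b
  apply Subtype.ext
  show ((Kc x M).d 0 0) b = _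
  rw [(Kc x M).shape 0 0 (fun h => Nat.succ_ne_zero 0 h)]
  rfl

lemma part0 :
    Nonempty ((LinearMap.ker (mulxTrans M x)) ≃ₗ[R] (extMod R 0 (Localization.Away x) M)) := by
  have i1 : (extMod R 0 (Localization.Away x) M : ModuleCat.{u} R) ≅ (Kc x M).homology 0 := by
    have h := ProjectiveResolution.isoExt (R := R) (cxRes x) 0 (ModuleCat.of R M)
    rw [cxRes_complex] at h
    exact h
  have i2 := (Kc x M).homologyIsoSc' 0 0 1 (by simp) (by simp)
  have i3 := ((Kc x M).sc' 0 0 1).moduleCatHomologyIso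
  have E := (i1 ≪≫ i2 ≪≫ i3).toLinearEquiv
  have E2 := Submodule.quotEquivOfEqBot _ (toCycles0_eq_bot x M)
  exact ⟨(ker0Equiv x M).symm.trans (E2.symm.trans E.symm)⟩

-- degree 1

lemma hom_into_sub_subsingleton (A B : ModuleCat.{u} R) [Subsingleton (B : Type u)] :
    Subsingleton (A ⟶ B) :=
  ⟨fun f g => ModuleCat.hom_ext (LinearMap.ext fun a => Subsingleton.elim _ _)⟩

lemma KXsucc2_subsingleton (j : ℕ) :
    Subsingleton (((Kc x M).X (j + 2) : ModuleCat.{u} R) : Type u) :=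
  ⟨fun f g => ModuleCat.hom_ext (LinearMap.ext fun a => by
    have ha : a = 0 := @Subsingleton.elim _ (inferInstanceAs (Subsingleton PUnit.{u+1})) _ _
    rw [ha, LinearMap.map_zero, LinearMap.map_zero])⟩

lemma sc1_g_eq_zero : ((Kc x M).sc' 0 1 2).g = 0 :=
  @Subsingleton.elim _
    (@hom_into_sub_subsingleton R _ ((Kc x M).X 1) ((Kc x M).X 2) (KXsucc2_subsingleton x M 0)) _ _

lemma sc1_ker_top : LinearMap.ker (((Kc x M).sc' 0 1 2).g.hom) = ⊤ := by
  rw [sc1_g_eq_zero, ModuleCat.hom_zero]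
  exact LinearMap.ker_zero

noncomputable def E4 :
    (LinearMap.ker (((Kc x M).sc' 0 1 2).g.hom) : Type u) ≃ₗ[R] (ℕ → M) :=
  (LinearEquiv.ofTop _ (sc1_ker_top x M)).trans (eF1 x M)

lemma hmap1 :
    Submodule.map (E4 x M).toLinearMap
        (LinearMap.range ((Kc x M).sc' 0 1 2).moduleCatToCycles)
      = LinearMap.range (mulxTrans M x) := by
  ext b
  constructor
  · rintro ⟨⟨a, ha⟩, ⟨ψ, hψ⟩, rfl⟩
    refine ⟨eF0 x M ψ, ?_⟩
    have h1 : ((Kc x M).sc' 0 1 2).f ψ = a := congrArg Subtype.val hψ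
    have h2 : (Kc x M).d 0 1 ψ = a := h1
    exact (eF1_d x M ψ).symm.trans (congrArg (eF1 x M) h2)
  · rintro ⟨s, rfl⟩
    refine ⟨⟨(Kc x M).d 0 1 ((eF0 x M).symm s), ?_⟩, ⟨(eF0 x M).symm s, rfl⟩, ?_⟩
    · rw [sc1_ker_top]
      trivial
    · show eF1 x M ((Kc x M).d 0 1 ((eF0 x M).symm s)) = mulxTrans M x s
      rw [eF1_d, LinearEquiv.apply_symm_apply]

lemma part1 :
    Nonempty (((∀ _ : ℕ, M) ⧸ LinearMap.range (mulxTrans M x)) ≃ₗ[R]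
      (extMod R 1 (Localization.Away x) M)) := by
  have i1 : (extMod R 1 (Localization.Away x) M : ModuleCat.{u} R) ≅ (Kc x M).homology 1 := by
    have h := ProjectiveResolution.isoExt (R := R) (cxRes x) 1 (ModuleCat.of R M)
    rw [cxRes_complex] at h
    exact h
  have i2 := (Kc x M).homologyIsoSc' 0 1 2 (by simp) (by simp)
  have i3 := ((Kc x M).sc' 0 1 2).moduleCatHomologyIso
  have E := (i1 ≪≫ i2 ≪≫ i3).toLinearEquiv
  have E5 := Submodule.Quotient.equiv _ _ (E4 x M) (hmap1 x M)
  exact ⟨E5.symm.trans E.symm⟩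

-- degree ≥ 2

lemma subsingleton_of_isZero {X : ModuleCat.{u} R} (h : IsZero X) :
    Subsingleton (X : Type u) := by
  have hid : (𝟙 X : X ⟶ X) = 0 := h.eq_of_src _ _
  refine ⟨fun a b => ?_⟩
  have ha : a = (𝟙 X : X ⟶ X) a := rfl
  have hb : b = (𝟙 X : X ⟶ X) b := rfl
  rw [ha, hb, hid]
  rfl

lemma part2 (i : ℕ) (hi : 2 ≤ i) :
    Subsingleton (extMod R i (Localization.Away x) M : Type u) := by
  obtain ⟨j, rfl⟩ : ∃ j, i = j + 2 := ⟨i - 2, by omega⟩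
  have hzero : IsZero ((Kc x M).homology (j + 2)) := by
    rw [← HomologicalComplex.exactAt_iff_isZero_homology]
    rw [HomologicalComplex.exactAt_iff' _ (j + 1) (j + 2) (j + 3) (by simp) (by simp)]
    exact ShortComplex.exact_of_isZero_X₂ _
      (@ModuleCat.isZero_of_subsingleton R _ _ (KXsucc2_subsingleton x M j))
  have hiso : (extMod R (j + 2) (Localization.Away x) M : ModuleCat.{u} R)
      ≅ (Kc x M).homology (j + 2) := by
    have h := ProjectiveResolution.isoExt (R := R) (cxRes x) (j + 2) (ModuleCat.of R M)
    rw [cxRes_complex] at h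
    exact h
  exact subsingleton_of_isZero (hzero.of_iso hiso)


end Stmt6Aux

/-- Let `R` be a commutative ring, `M` an `R`-module and `x ∈ R`. For the inverse system
`{M, x}` (all modules `M`, transition maps multiplication by `x`) one has
`lim {M, x} ≅ Hom_R(R_x, M) = Ext^0_R(R_x, M)`, `lim¹ {M, x} ≅ Ext^1_R(R_x, M)`, and
`Ext^i_R(R_x, M) = 0` for all `i ≥ 2`, where `R_x` is the localization of `R` at the
powers of `x`. -/
theorem stmt6 (R : Type u) [CommRing R] (M : Type u) [AddCommGroup M] [Module R M] (x : R) :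
    Nonempty ((LinearMap.ker (mulxTrans M x)) ≃ₗ[R] (extMod R 0 (Localization.Away x) M)) ∧
    Nonempty (((∀ _ : ℕ, M) ⧸ LinearMap.range (mulxTrans M x)) ≃ₗ[R]
      (extMod R 1 (Localization.Away x) M)) ∧
    ∀ i : ℕ, 2 ≤ i → Subsingleton (extMod R i (Localization.Away x) M) := ⟨Stmt6Aux.part0 x M, Stmt6Aux.part1 x M, fun i hi => Stmt6Aux.part2 x M i hi⟩
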